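/- arXiv:0910.5394 — 2 statements merged into one kernel-verified Lean document; each statement's English description precedes it below -/
import Mathlib

section
/- The set A_g of allowed globules configurations satisfies the Uniform Exterior Sphere property UES(α) with constant α = r_-²/(2 r_+ n √n). -/
open scoped RealInnerProductSpace

noncomputable section

variable {H : Type*} [NormedAddCommGroup H] [InnerProductSpace ℝ H]

/-- The set `N^D_{x,α}` of inward unit normal vectors to `D` at `x` with constant `α`. -/
def normalSet (D : Set H) (x : H) (α : ℝ) : Set H :=
  {v | ‖v‖ = 1 ∧ Metric.ball (x - α • v) α ∩ D = ∅}

/-- The set `N^D_x = ⋃_{α>0} N^D_{x,α}` of inward unit normal vectors to `D` at `x`. -/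
def normalCone (D : Set H) (x : H) : Set H :=
  ⋃ α ∈ Set.Ioi (0 : ℝ), normalSet D x α

/-- `D` satisfies the Uniform Exterior Sphere property with constant `α`. -/
def UES (D : Set H) (α : ℝ) : Prop :=
  ∀ x ∈ frontier D, normalCone D x = normalSet D x α ∧ (normalSet D x α).Nonempty

/-- `D` satisfies the Uniform Normal Cone property with constants `β`, `δ`. -/
def UNC (D : Set H) (β δ : ℝ) : Prop :=
  ∀ x ∈ frontier D, ∃ l : H, ‖l‖ = 1 ∧
    ∀ y ∈ frontier D, ‖y - x‖ ≤ δ → ∀ v ∈ normalCone D y, ⟪v, l⟫ ≥ Real.sqrt (1 - β ^ 2)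

/-- The configuration space `ℝ^{(d+1)n}` of `n` globules in `ℝ^d`: each globule is a pair
(center, radius), and the whole space carries the Euclidean (`L²`) norm. -/
abbrev GConf (d n : ℕ) : Type :=
  PiLp 2 (fun _ : Fin n => WithLp 2 (EuclideanSpace ℝ (Fin d) × ℝ))

variable {d n : ℕ}

/-- Center of the `i`-th globule. -/
def gC (x : GConf d n) (i : Fin n) : EuclideanSpace ℝ (Fin d) := (x i).fst

/-- Radius of the `i`-th globule. -/
def gR (x : GConf d n) (i : Fin n) : ℝ := (x i).snd

/-- Build a configuration from a family of (center, radius) pairs. -/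
def mkG (f : Fin n → EuclideanSpace ℝ (Fin d) × ℝ) : GConf d n :=
  (WithLp.equiv 2 _).symm fun i => (WithLp.equiv 2 _).symm (f i)

/-- The set `A_g` of allowed globule configurations: all radii lie in `[r₋, r₊]` and the
globules are pairwise non-intersecting. -/
def Ag (d n : ℕ) (rm rp : ℝ) : Set (GConf d n) :=
  {x | (∀ i, rm ≤ gR x i ∧ gR x i ≤ rp) ∧
    ∀ i j, i ≠ j → ‖gC x i - gC x j‖ ≥ gR x i + gR x j}

/-- The unit normal vector `n_{ij}(x)` to the collision constraint `|x_i−x_j| ≥ x̆_i+x̆_j`,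
at a configuration `x` with `|x_i−x_j| = x̆_i+x̆_j > 0`. -/
def nij (x : GConf d n) (i j : Fin n) : GConf d n :=
  mkG fun k =>
    if k = i then ((2 * (gR x i + gR x j))⁻¹ • (gC x i - gC x j), -(1 / 2 : ℝ))
    else if k = j then ((2 * (gR x i + gR x j))⁻¹ • (gC x j - gC x i), -(1 / 2 : ℝ))
    else 0

/-- The unit normal vector `n_{i+}` to the constraint `x̆_i ≤ r₊`: its only nonzero component
is the radius component of globule `i`, equal to `−1`. -/
def nplus (d n : ℕ) (i : Fin n) : GConf d n :=
  mkG fun k => if k = i then (0, (-1 : ℝ)) else 0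

/-- The unit normal vector `n_{i−}` to the constraint `x̆_i ≥ r₋`: its only nonzero component
is the radius component of globule `i`, equal to `1`. -/
def nminus (d n : ℕ) (i : Fin n) : GConf d n :=
  mkG fun k => if k = i then (0, (1 : ℝ)) else 0

end

namespace StmtAux
open Filter Finset
open scoped Topology

noncomputable section
variable {d n : ℕ}

@[simp] lemma gC_add (x y : GConf d n) (i : Fin n) : gC (x + y) i = gC x i + gC y i := rfl
@[simp] lemma gR_add (x y : GConf d n) (i : Fin n) : gR (x + y) i = gR x i + gR y i := rfl
@[simp] lemma gC_sub (x y : GConf d n) (i : Fin n) : gC (x - y) i = gC x i - gC y i := rfl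
@[simp] lemma gR_sub (x y : GConf d n) (i : Fin n) : gR (x - y) i = gR x i - gR y i := rfl
@[simp] lemma gC_smul (t : ℝ) (x : GConf d n) (i : Fin n) : gC (t • x) i = t • gC x i := rfl
@[simp] lemma gR_smul (t : ℝ) (x : GConf d n) (i : Fin n) : gR (t • x) i = t * gR x i := rfl
@[simp] lemma gC_mkG (f : Fin n → EuclideanSpace ℝ (Fin d) × ℝ) (i : Fin n) :
    gC (mkG f) i = (f i).1 := rfl
@[simp] lemma gR_mkG (f : Fin n → EuclideanSpace ℝ (Fin d) × ℝ) (i : Fin n) :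
    gR (mkG f) i = (f i).2 := rfl

lemma inner_gconf (a b : GConf d n) :
    ⟪a, b⟫ = ∑ i, (⟪gC a i, gC b i⟫ + gR a i * gR b i) := by
  rw [PiLp.inner_apply]
  refine Finset.sum_congr rfl fun i _ => ?_
  rw [WithLp.prod_inner_apply]
  simp [gC, gR, RCLike.inner_apply, mul_comm]

lemma norm_sq_gconf (a : GConf d n) :
    ‖a‖ ^ 2 = ∑ i, (‖gC a i‖ ^ 2 + gR a i ^ 2) := by
  rw [PiLp.norm_sq_eq_of_L2]
  refine Finset.sum_congr rfl fun i _ => ?_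
  rw [WithLp.prod_norm_sq_eq_of_L2]
  simp [gC, gR, sq_abs]

lemma continuous_gR (i : Fin n) : Continuous (fun x : GConf d n => gR x i) := by
  have := (PiLp.continuousLinearEquiv 2 ℝ
    (fun _ : Fin n => WithLp 2 (EuclideanSpace ℝ (Fin d) × ℝ))).continuous
  exact ((WithLp.prod_continuous_ofLp 2 _ _).comp ((continuous_apply i).comp (PiLp.continuous_ofLp 2 _))).snd

lemma continuous_gC (i : Fin n) : Continuous (fun x : GConf d n => gC x i) := by
  have := (PiLp.continuousLinearEquiv 2 ℝ
    (fun _ : Fin n => WithLp 2 (EuclideanSpace ℝ (Fin d) × ℝ))).continuous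
  exact ((WithLp.prod_continuous_ofLp 2 _ _).comp ((continuous_apply i).comp (PiLp.continuous_ofLp 2 _))).fst

lemma mem_normalSet_iff {H : Type*} [NormedAddCommGroup H] [InnerProductSpace ℝ H]
    {D : Set H} {x v : H} {α : ℝ} (hα : 0 < α) :
    v ∈ normalSet D x α ↔ ‖v‖ = 1 ∧ ∀ y ∈ D, -(‖y - x‖ ^ 2) ≤ 2 * α * ⟪v, y - x⟫ := by
  unfold normalSet
  simp only [Set.mem_setOf_eq, and_congr_right_iff]
  intro hv
  have key : ∀ y : H, y ∉ Metric.ball (x - α • v) α ↔ -(‖y - x‖ ^ 2) ≤ 2 * α * ⟪v, y - x⟫ := by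
    intro y
    rw [Metric.mem_ball, not_lt, dist_eq_norm]
    have hyz : y - (x - α • v) = (y - x) + α • v := by abel
    rw [hyz]
    have hexp : ‖(y - x) + α • v‖ ^ 2 = ‖y - x‖ ^ 2 + 2 * α * ⟪v, y - x⟫ + α ^ 2 := by
      rw [norm_add_sq_real, real_inner_smul_right, norm_smul, real_inner_comm,
        Real.norm_eq_abs, hv, abs_of_pos hα]
      ring
    constructor
    · intro h
      have h2 : α ^ 2 ≤ ‖(y - x) + α • v‖ ^ 2 := pow_le_pow_left₀ hα.le h 2
      nlinarith
    · intro h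
      have h2 : α ^ 2 ≤ ‖(y - x) + α • v‖ ^ 2 := by nlinarith
      calc α = Real.sqrt (α ^ 2) := (Real.sqrt_sq hα.le).symm
        _ ≤ Real.sqrt (‖(y - x) + α • v‖ ^ 2) := Real.sqrt_le_sqrt h2
        _ = _ := Real.sqrt_sq (norm_nonneg _)
  rw [Set.eq_empty_iff_forall_notMem]
  constructor
  · intro h y hy
    exact (key y).mp fun hb => h y ⟨hb, hy⟩
  · rintro h y ⟨hb, hy⟩
    exact ((key y).mpr (h y hy)) hb

lemma isClosed_Ag (rm rp : ℝ) : IsClosed (Ag d n rm rp) := by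
  have hrw : Ag d n rm rp =
      (⋂ i, {z : GConf d n | rm ≤ gR z i} ∩ {z | gR z i ≤ rp}) ∩
      ⋂ p : Fin n × Fin n, {z | p.1 ≠ p.2 → gR z p.1 + gR z p.2 ≤ ‖gC z p.1 - gC z p.2‖} := by
    ext z
    simp only [Ag, Set.mem_setOf_eq, Set.mem_inter_iff, Set.mem_iInter, ge_iff_le, Prod.forall]
  rw [hrw]
  refine IsClosed.inter (isClosed_iInter fun i =>
    IsClosed.inter (isClosed_le continuous_const (continuous_gR i))
      (isClosed_le (continuous_gR i) continuous_const))
    (isClosed_iInter fun p => ?_)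
  by_cases hp : p.1 = p.2
  · have : {z : GConf d n | p.1 ≠ p.2 → gR z p.1 + gR z p.2 ≤ ‖gC z p.1 - gC z p.2‖} = Set.univ := by
      ext z; simp [hp]
    rw [this]; exact isClosed_univ
  · simp only [hp, ne_eq, not_false_iff, true_implies]
    exact isClosed_le ((continuous_gR p.1).add (continuous_gR p.2))
      ((continuous_gC p.1).sub (continuous_gC p.2)).norm

lemma exists_active {rm rp : ℝ} {x : GConf d n} (hx : x ∈ frontier (Ag d n rm rp)) :
    (∃ i, gR x i = rm) ∨ (∃ i, gR x i = rp) ∨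
      ∃ i j, i ≠ j ∧ ‖gC x i - gC x j‖ = gR x i + gR x j := by
  by_contra hcon
  push_neg at hcon
  obtain ⟨hc1, hc2, hc3⟩ := hcon
  have hxA : x ∈ Ag d n rm rp := (isClosed_Ag rm rp).frontier_subset hx
  have hint : x ∈ interior (Ag d n rm rp) := by
    rw [mem_interior]
    refine ⟨(⋂ i, {z : GConf d n | rm < gR z i} ∩ {z | gR z i < rp}) ∩
      ⋂ p : Fin n × Fin n, {z | p.1 ≠ p.2 → gR z p.1 + gR z p.2 < ‖gC z p.1 - gC z p.2‖},
      ?_, ?_, ?_⟩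
    · rintro z ⟨hz1, hz2⟩
      simp only [Set.mem_iInter, Set.mem_inter_iff, Set.mem_setOf_eq] at hz1 hz2
      exact ⟨fun i => ⟨(hz1 i).1.le, (hz1 i).2.le⟩, fun i j hij => (hz2 (i, j) hij).le⟩
    · refine IsOpen.inter (isOpen_iInter_of_finite fun i =>
        IsOpen.inter (isOpen_lt continuous_const (continuous_gR i))
          (isOpen_lt (continuous_gR i) continuous_const))
        (isOpen_iInter_of_finite fun p => ?_)
      by_cases hp : p.1 = p.2
      · have : {z : GConf d n | p.1 ≠ p.2 → gR z p.1 + gR z p.2 < ‖gC z p.1 - gC z p.2‖} = Set.univ := by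
          ext z; simp [hp]
        rw [this]; exact isOpen_univ
      · simp only [hp, ne_eq, not_false_iff, true_implies]
        exact isOpen_lt ((continuous_gR p.1).add (continuous_gR p.2))
          ((continuous_gC p.1).sub (continuous_gC p.2)).norm
    · simp only [Set.mem_inter_iff, Set.mem_iInter, Set.mem_setOf_eq]
      refine ⟨fun i => ⟨lt_of_le_of_ne (hxA.1 i).1 fun e => hc1 i e.symm,
        lt_of_le_of_ne (hxA.1 i).2 (hc2 i)⟩, fun p hp =>
        lt_of_le_of_ne (hxA.2 p.1 p.2 hp) fun e => hc3 p.1 p.2 hp e.symm⟩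
  rw [(isClosed_Ag rm rp).frontier_eq] at hx
  exact hx.2 hint

/-! ### contact graph and the spreading direction `u` -/

def cgraph (x : GConf d n) : SimpleGraph (Fin n) where
  Adj i j := i ≠ j ∧ ‖gC x i - gC x j‖ = gR x i + gR x j
  symm := by
    constructor
    rintro i j ⟨h1, h2⟩
    exact ⟨h1.symm, by rwa [norm_sub_rev, add_comm (gR x j)]⟩
  loopless := ⟨fun i h => h.1 rfl⟩

def grep (x : GConf d n) (i : Fin n) : Fin n := ((cgraph x).connectedComponentMk i).out

lemma grep_eq_of_adj {x : GConf d n} {i j : Fin n} (h : (cgraph x).Adj i j) :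
    grep x i = grep x j := by
  unfold grep
  rw [SimpleGraph.ConnectedComponent.connectedComponentMk_eq_of_adj h]

lemma reach_grep (x : GConf d n) (i : Fin n) : (cgraph x).Reachable (grep x i) i := by
  have : (cgraph x).connectedComponentMk (grep x i) = (cgraph x).connectedComponentMk i :=
    ((cgraph x).connectedComponentMk i).out_eq
  exact SimpleGraph.ConnectedComponent.eq.mp this

def udot (rm rp : ℝ) (x : GConf d n) (i : Fin n) : ℝ :=
  if gR x i = rm then rm / 2 else if gR x i = rp then -(rm / 2) else 0

lemma udot_abs_le {rm rp : ℝ} (h0 : 0 < rm) (x : GConf d n) (i : Fin n) :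
    |udot rm rp x i| ≤ rm / 2 := by
  unfold udot
  split_ifs <;> simp [abs_of_pos, h0, le_of_lt, h0.le, abs_of_nonneg, half_pos h0] <;> positivity

def uvec (rm rp : ℝ) (x : GConf d n) : GConf d n :=
  mkG fun i => (gC x i - gC x (grep x i), udot rm rp x i)

@[simp] lemma gR_uvec (rm rp : ℝ) (x : GConf d n) (i : Fin n) :
    gR (uvec rm rp x) i = udot rm rp x i := rfl

@[simp] lemma gC_uvec (rm rp : ℝ) (x : GConf d n) (i : Fin n) :
    gC (uvec rm rp x) i = gC x i - gC x (grep x i) := rfl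

lemma gC_uvec_sub_of_adj {rm rp : ℝ} {x : GConf d n} {i j : Fin n} (h : (cgraph x).Adj i j) :
    gC (uvec rm rp x) i - gC (uvec rm rp x) j = gC x i - gC x j := by
  rw [gC_uvec, gC_uvec, grep_eq_of_adj h]
  abel

lemma walk_bound {rm rp : ℝ} (hrp : 0 ≤ rp) {x : GConf d n} (hx : x ∈ Ag d n rm rp)
    {i j : Fin n} (p : (cgraph x).Walk i j) :
    ‖gC x i - gC x j‖ ≤ 2 * rp * p.length := by
  induction p with
  | nil => simp
  | @cons u v w h q ih =>
    have hedge : ‖gC x u - gC x v‖ ≤ 2 * rp := by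
      rw [(show u ≠ v ∧ ‖gC x u - gC x v‖ = gR x u + gR x v from h).2]
      have h1 := (hx.1 u).2
      have h2 := (hx.1 v).2
      linarith
    calc ‖gC x u - gC x w‖ ≤ ‖gC x u - gC x v‖ + ‖gC x v - gC x w‖ := by
          have := norm_sub_le_norm_sub_add_norm_sub (gC x u) (gC x v) (gC x w)
          exact this
      _ ≤ 2 * rp + 2 * rp * q.length := add_le_add hedge ih
      _ = 2 * rp * (q.length + 1) := by ring
      _ = 2 * rp * (SimpleGraph.Walk.cons h q).length := by
          rw [SimpleGraph.Walk.length_cons]; push_cast; ring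

lemma grep_bound {rm rp : ℝ} (hn : 1 ≤ n) (hrp : 0 ≤ rp) {x : GConf d n}
    (hx : x ∈ Ag d n rm rp) (i : Fin n) :
    ‖gC x i - gC x (grep x i)‖ ≤ 2 * rp * ((n : ℝ) - 1) := by
  obtain ⟨w⟩ := reach_grep x i
  have hlen : ((w.toPath : (cgraph x).Walk (grep x i) i).length : ℝ) ≤ (n : ℝ) - 1 := by
    have := (w.toPath.2).length_lt
    rw [Fintype.card_fin] at this
    have : (w.toPath : (cgraph x).Walk (grep x i) i).length + 1 ≤ n := this
    have := (Nat.cast_le (α := ℝ)).mpr this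
    push_cast at this
    linarith
  calc ‖gC x i - gC x (grep x i)‖ = ‖gC x (grep x i) - gC x i‖ := (norm_sub_rev _ _).symm
    _ ≤ 2 * rp * (w.toPath : (cgraph x).Walk (grep x i) i).length := walk_bound hrp hx _
    _ ≤ 2 * rp * ((n : ℝ) - 1) := by
        have h2 : 0 ≤ 2 * rp := by linarith
        exact mul_le_mul_of_nonneg_left hlen h2

lemma uvec_norm_le {rm rp : ℝ} (hn : 1 ≤ n) (h0 : 0 < rm) (hr : rm < rp) {x : GConf d n}
    (hx : x ∈ Ag d n rm rp) :
    ‖uvec rm rp x‖ ≤ 2 * rp * n * Real.sqrt n := by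
  have hrp : 0 < rp := h0.trans hr
  have hn1 : (1 : ℝ) ≤ (n : ℝ) := by exact_mod_cast hn
  have hsq : ‖uvec rm rp x‖ ^ 2 ≤ (2 * rp * n * Real.sqrt n) ^ 2 := by
    rw [norm_sq_gconf]
    have hterm : ∀ i : Fin n, ‖gC (uvec rm rp x) i‖ ^ 2 + gR (uvec rm rp x) i ^ 2 ≤
        (2 * rp * ((n : ℝ) - 1)) ^ 2 + (rm / 2) ^ 2 := by
      intro i
      have h1 : ‖gC (uvec rm rp x) i‖ ^ 2 ≤ (2 * rp * ((n : ℝ) - 1)) ^ 2 := by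
        have := grep_bound hn hrp.le hx i
        rw [gC_uvec]
        nlinarith [norm_nonneg (gC x i - gC x (grep x i))]
      have h2 : gR (uvec rm rp x) i ^ 2 ≤ (rm / 2) ^ 2 := by
        have := udot_abs_le (rm := rm) (rp := rp) h0 x i
        rw [gR_uvec]
        nlinarith [abs_nonneg (udot rm rp x i), sq_abs (udot rm rp x i)]
      linarith
    calc ∑ i : Fin n, (‖gC (uvec rm rp x) i‖ ^ 2 + gR (uvec rm rp x) i ^ 2)
        ≤ ∑ _i : Fin n, ((2 * rp * ((n : ℝ) - 1)) ^ 2 + (rm / 2) ^ 2) :=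
          Finset.sum_le_sum fun i _ => hterm i
      _ = n * ((2 * rp * ((n : ℝ) - 1)) ^ 2 + (rm / 2) ^ 2) := by
          rw [Finset.sum_const, Finset.card_univ, Fintype.card_fin, nsmul_eq_mul]
      _ ≤ (2 * rp * n * Real.sqrt n) ^ 2 := by
          have hs : Real.sqrt n ^ 2 = (n : ℝ) := Real.sq_sqrt (by positivity)
          have hrm2 : rm ^ 2 ≤ rp ^ 2 := by nlinarith
          have key : (2 * rp * ((n : ℝ) - 1)) ^ 2 + (rm / 2) ^ 2 ≤ 4 * rp ^ 2 * (n : ℝ) ^ 2 := by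
            nlinarith [sq_nonneg rp, mul_nonneg (sq_nonneg rp) (sub_nonneg.mpr hn1)]
          calc (n : ℝ) * ((2 * rp * ((n : ℝ) - 1)) ^ 2 + (rm / 2) ^ 2)
              ≤ (n : ℝ) * (4 * rp ^ 2 * (n : ℝ) ^ 2) :=
                mul_le_mul_of_nonneg_left key (by positivity)
            _ = (2 * rp * n * Real.sqrt n) ^ 2 := by
                have : (2 * rp * (n:ℝ) * Real.sqrt n) ^ 2
                    = 4 * rp ^ 2 * (n : ℝ) ^ 2 * Real.sqrt n ^ 2 := by ring
                rw [this, hs]; ring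
  have := Real.sqrt_le_sqrt hsq
  rwa [Real.sqrt_sq (norm_nonneg _), Real.sqrt_sq (by positivity)] at this

/-! ### per-constraint inequalities -/

lemma comp_bound (w : GConf d n) {i j : Fin n} (hij : i ≠ j) :
    ‖gC w i - gC w j‖ ^ 2 ≤ 2 * ‖w‖ ^ 2 := by
  have h1 : ‖gC w i‖ ^ 2 + gR w i ^ 2 + (‖gC w j‖ ^ 2 + gR w j ^ 2) ≤ ‖w‖ ^ 2 := by
    rw [norm_sq_gconf]
    have := Finset.sum_le_sum_of_subset_of_nonneg
      (Finset.subset_univ {i, j})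
      (fun k _ _ => by positivity : ∀ k ∈ Finset.univ, k ∉ ({i, j} : Finset (Fin n)) →
        0 ≤ ‖gC w k‖ ^ 2 + gR w k ^ 2)
    rwa [Finset.sum_pair hij] at this
  have h2 : ‖gC w i - gC w j‖ ≤ ‖gC w i‖ + ‖gC w j‖ := norm_sub_le _ _
  nlinarith [norm_nonneg (gC w i - gC w j), norm_nonneg (gC w i), norm_nonneg (gC w j),
    sq_nonneg (‖gC w i‖ - ‖gC w j‖), sq_nonneg (gR w i), sq_nonneg (gR w j)]

lemma contact_key {rm rp : ℝ} (h0 : 0 < rm) {x y : GConf d n}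
    (hx : x ∈ Ag d n rm rp) (hy : y ∈ Ag d n rm rp) {i j : Fin n} (hij : i ≠ j)
    (hact : ‖gC x i - gC x j‖ = gR x i + gR x j) :
    (gR x i + gR x j) * (gR (y - x) i + gR (y - x) j) - ‖y - x‖ ^ 2
      ≤ ⟪gC x i - gC x j, gC (y - x) i - gC (y - x) j⟫ := by
  set e := gC x i - gC x j with he
  set δ := gC (y - x) i - gC (y - x) j with hδ
  have hed : e + δ = gC y i - gC y j := by
    rw [he, hδ, gC_sub, gC_sub]; abel
  have hRpos : 0 < gR x i + gR x j := by
    have := (hx.1 i).1; have := (hx.1 j).1; linarith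
  have hypos : 0 ≤ gR y i + gR y j := by
    have := (hy.1 i).1; have := (hy.1 j).1; linarith
  have hfeas : gR y i + gR y j ≤ ‖e + δ‖ := by rw [hed]; exact hy.2 i j hij
  have hsq : (gR y i + gR y j) ^ 2 ≤ ‖e + δ‖ ^ 2 := by
    nlinarith [norm_nonneg (e + δ)]
  have hexp : ‖e + δ‖ ^ 2 = ‖e‖ ^ 2 + 2 * ⟪e, δ⟫ + ‖δ‖ ^ 2 := norm_add_sq_real e δ
  have hne : ‖e‖ = gR x i + gR x j := hact
  have hδb : ‖δ‖ ^ 2 ≤ 2 * ‖y - x‖ ^ 2 := comp_bound (y - x) hij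
  have hgr : gR (y - x) i + gR (y - x) j = (gR y i + gR y j) - (gR x i + gR x j) := by
    rw [gR_sub, gR_sub]; ring
  nlinarith [sq_nonneg ((gR y i + gR y j) - (gR x i + gR x j))]

lemma udot_of_rm {rm rp : ℝ} {x : GConf d n} {i : Fin n} (hi : gR x i = rm) :
    udot rm rp x i = rm / 2 := by simp [udot, hi]

lemma udot_of_rp {rm rp : ℝ} (hr : rm < rp) {x : GConf d n} {i : Fin n} (hi : gR x i = rp) :
    udot rm rp x i = -(rm / 2) := by
  unfold udot
  rw [hi, if_neg hr.ne', if_pos rfl]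

/-! ### strictly feasible directions enter `Ag` -/

lemma feas {rm rp : ℝ} (h0 : 0 < rm) {x : GConf d n} (hx : x ∈ Ag d n rm rp)
    (dv : GConf d n)
    (h1 : ∀ i, gR x i = rm → 0 < gR dv i)
    (h2 : ∀ i, gR x i = rp → gR dv i < 0)
    (h3 : ∀ i j, i ≠ j → ‖gC x i - gC x j‖ = gR x i + gR x j →
      (gR x i + gR x j) * (gR dv i + gR dv j) < ⟪gC x i - gC x j, gC dv i - gC dv j⟫) :
    ∀ᶠ t in 𝓝[>] (0 : ℝ), x + t • dv ∈ Ag d n rm rp := by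
  have hlo : ∀ᶠ t in 𝓝[>] (0 : ℝ), ∀ i, rm ≤ gR (x + t • dv) i := by
    rw [Filter.eventually_all]
    intro i
    by_cases hi : gR x i = rm
    · filter_upwards [self_mem_nhdsWithin] with t ht
      have ht0 : 0 < t := ht
      have := h1 i hi
      simp only [gR_add, gR_smul, hi]
      nlinarith
    · have hlt : rm < gR x i := lt_of_le_of_ne (hx.1 i).1 (Ne.symm hi)
      have hcont : Filter.Tendsto (fun t : ℝ => gR x i + t * gR dv i) (𝓝 0) (𝓝 (gR x i)) := by
        have : Filter.Tendsto (fun t : ℝ => gR x i + t * gR dv i) (𝓝 0)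
            (𝓝 (gR x i + 0 * gR dv i)) := by
          exact (continuous_const.add (continuous_id.mul continuous_const)).tendsto 0
        simpa using this
      have := hcont.eventually (eventually_gt_nhds hlt)
      exact (this.filter_mono nhdsWithin_le_nhds).mono fun t ht => by
        simpa [gR_add, gR_smul] using ht.le
  have hhi : ∀ᶠ t in 𝓝[>] (0 : ℝ), ∀ i, gR (x + t • dv) i ≤ rp := by
    rw [Filter.eventually_all]
    intro i
    by_cases hi : gR x i = rp
    · filter_upwards [self_mem_nhdsWithin] with t ht
      have ht0 : 0 < t := ht
      have := h2 i hi
      simp only [gR_add, gR_smul, hi]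
      nlinarith
    · have hlt : gR x i < rp := lt_of_le_of_ne (hx.1 i).2 hi
      have hcont : Filter.Tendsto (fun t : ℝ => gR x i + t * gR dv i) (𝓝 0) (𝓝 (gR x i)) := by
        have : Filter.Tendsto (fun t : ℝ => gR x i + t * gR dv i) (𝓝 0)
            (𝓝 (gR x i + 0 * gR dv i)) := by
          exact (continuous_const.add (continuous_id.mul continuous_const)).tendsto 0
        simpa using this
      have := hcont.eventually (eventually_lt_nhds hlt)
      exact (this.filter_mono nhdsWithin_le_nhds).mono fun t ht => by
        simpa [gR_add, gR_smul] using ht.le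
  have hpair : ∀ᶠ t in 𝓝[>] (0 : ℝ), ∀ p : Fin n × Fin n, p.1 ≠ p.2 →
      gR (x + t • dv) p.1 + gR (x + t • dv) p.2 ≤
        ‖gC (x + t • dv) p.1 - gC (x + t • dv) p.2‖ := by
    rw [Filter.eventually_all]
    rintro ⟨i, j⟩
    by_cases hij : i = j
    · filter_upwards with t ht; exact absurd hij ht
    · simp only [ne_eq, hij, not_false_iff, true_implies]
      have hdiff : ∀ t : ℝ, gC (x + t • dv) i - gC (x + t • dv) j
          = (gC x i - gC x j) + t • (gC dv i - gC dv j) := by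
        intro t
        simp only [gC_add, gC_smul, smul_sub]
        abel
      by_cases hact : ‖gC x i - gC x j‖ = gR x i + gR x j
      · filter_upwards [self_mem_nhdsWithin] with t (ht : (0:ℝ) < t)
        set e := gC x i - gC x j
        set δ := gC dv i - gC dv j
        have hR : 0 < gR x i + gR x j := by
          have := (hx.1 i).1; have := (hx.1 j).1; linarith
        have hkey := h3 i j hij hact
        have hCS : ⟪e, e + t • δ⟫ ≤ ‖e‖ * ‖e + t • δ‖ := real_inner_le_norm _ _
        have hinner : ⟪e, e + t • δ⟫ = ‖e‖ ^ 2 + t * ⟪e, δ⟫ := by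
          rw [inner_add_right, real_inner_smul_right, real_inner_self_eq_norm_sq]
        have hglue : (gR x i + gR x j) * ((gR x i + gR x j) + t * (gR dv i + gR dv j))
            < (gR x i + gR x j) * ‖e + t • δ‖ := by
          have hEe : ‖e‖ = gR x i + gR x j := hact
          have h5 : (gR x i + gR x j) * ((gR x i + gR x j) + t * (gR dv i + gR dv j))
              < ‖e‖ ^ 2 + t * ⟪e, δ⟫ := by
            rw [hEe]; nlinarith
          calc (gR x i + gR x j) * ((gR x i + gR x j) + t * (gR dv i + gR dv j))
              < ‖e‖ ^ 2 + t * ⟪e, δ⟫ := h5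
            _ = ⟪e, e + t • δ⟫ := hinner.symm
            _ ≤ ‖e‖ * ‖e + t • δ‖ := hCS
            _ = (gR x i + gR x j) * ‖e + t • δ‖ := by rw [hEe]
        have := (mul_lt_mul_iff_right₀ hR).mp hglue
        rw [hdiff t]
        simp only [gR_add, gR_smul]
        calc gR x i + t * gR dv i + (gR x j + t * gR dv j)
            = (gR x i + gR x j) + t * (gR dv i + gR dv j) := by ring
          _ ≤ ‖e + t • δ‖ := this.le
      · have hlt : gR x i + gR x j < ‖gC x i - gC x j‖ :=
          lt_of_le_of_ne (hx.2 i j hij) fun e => hact e.symm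
        have hcont : Filter.Tendsto
            (fun t : ℝ => ‖(gC x i - gC x j) + t • (gC dv i - gC dv j)‖
              - (t * gR dv i + t * gR dv j)) (𝓝 0)
            (𝓝 ‖gC x i - gC x j‖) := by
          have hc : Continuous (fun t : ℝ => ‖(gC x i - gC x j) + t • (gC dv i - gC dv j)‖
              - (t * gR dv i + t * gR dv j)) := by
            refine Continuous.sub ?_ (by continuity)
            exact (continuous_const.add ((continuous_id.smul continuous_const))).norm
          have := hc.tendsto 0
          simpa using this
        have := hcont.eventually (eventually_gt_nhds hlt)
        refine (this.filter_mono nhdsWithin_le_nhds).mono fun t ht => ?_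
        rw [hdiff t]
        simp only [gR_add, gR_smul]
        linarith [ht]
  filter_upwards [hlo, hhi, hpair] with t h1' h2' h3'
  exact ⟨fun i => ⟨h1' i, h2' i⟩, fun i j hij => h3' (i, j) hij⟩

/-! ### proximal normals pair nonnegatively with strictly feasible directions -/

lemma inner_nonneg_of_normal {rm rp β : ℝ} (h0 : 0 < rm) (hβ : 0 < β) {x v : GConf d n}
    (hx : x ∈ Ag d n rm rp) (hv : v ∈ normalSet (Ag d n rm rp) x β)
    (dv : GConf d n)
    (h1 : ∀ i, gR x i = rm → 0 < gR dv i)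
    (h2 : ∀ i, gR x i = rp → gR dv i < 0)
    (h3 : ∀ i j, i ≠ j → ‖gC x i - gC x j‖ = gR x i + gR x j →
      (gR x i + gR x j) * (gR dv i + gR dv j) < ⟪gC x i - gC x j, gC dv i - gC dv j⟫) :
    0 ≤ ⟪v, dv⟫ := by
  obtain ⟨hv1, hv2⟩ := (mem_normalSet_iff hβ).mp hv
  have hev := feas h0 hx dv h1 h2 h3
  have hev2 : ∀ᶠ t in 𝓝[>] (0 : ℝ), -(t * ‖dv‖ ^ 2) ≤ 2 * β * ⟪v, dv⟫ := by
    filter_upwards [hev, self_mem_nhdsWithin] with t ht (ht0 : (0:ℝ) < t)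
    have hy := hv2 _ ht
    rw [add_sub_cancel_left, norm_smul, real_inner_smul_right, Real.norm_eq_abs,
      abs_of_pos ht0] at hy
    -- hy : -((t * ‖dv‖)^2) ≤ 2 * β * (t * ⟪v,dv⟫)
    nlinarith
  have hlim : Filter.Tendsto (fun t : ℝ => -(t * ‖dv‖ ^ 2)) (𝓝[>] (0:ℝ)) (𝓝 0) := by
    have hc : Filter.Tendsto (fun t : ℝ => -(t * ‖dv‖ ^ 2)) (𝓝 0) (𝓝 (-(0 * ‖dv‖ ^ 2))) :=
      ((continuous_id.mul continuous_const).neg).tendsto 0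
    simp only [zero_mul, neg_zero] at hc
    exact hc.mono_left nhdsWithin_le_nhds
  have h0le : (0 : ℝ) ≤ 2 * β * ⟪v, dv⟫ := le_of_tendsto hlim hev2
  nlinarith

lemma aux_eps {s t : ℝ} (h : ∀ ε : ℝ, 0 < ε → 0 ≤ s + ε * t) : 0 ≤ s := by
  rcases le_or_gt 0 s with hs | hs
  · exact hs
  rcases le_or_gt t 0 with ht | ht
  · have := h 1 one_pos
    nlinarith
  · have hε : 0 < -s / (2 * t) := div_pos (by linarith) (by linarith)
    have := h _ hε
    have hcc : -s / (2 * t) * t = -s / 2 := by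
      field_simp
    rw [hcc] at this
    linarith

/-! ### part B: the normal cone is contained in `normalSet α` -/

set_option maxHeartbeats 1000000 in
lemma coneSubset {rm rp : ℝ} (hn : 1 ≤ n) (h0 : 0 < rm) (hr : rm < rp) {x v : GConf d n}
    (hx : x ∈ Ag d n rm rp) {β : ℝ} (hβ : 0 < β) (hvβ : v ∈ normalSet (Ag d n rm rp) x β) :
    v ∈ normalSet (Ag d n rm rp) x (rm ^ 2 / (2 * rp * n * Real.sqrt n)) := by
  have hrp : 0 < rp := h0.trans hr
  have hn1 : (1 : ℝ) ≤ (n : ℝ) := by exact_mod_cast hn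
  have hsn : 0 < Real.sqrt n := Real.sqrt_pos.mpr (by linarith)
  set α := rm ^ 2 / (2 * rp * n * Real.sqrt n) with hα_def
  have hden : 0 < 2 * rp * n * Real.sqrt n := by positivity
  have hα : 0 < α := by positivity
  have hv1 : ‖v‖ = 1 := ((mem_normalSet_iff hβ).mp hvβ).1
  rw [mem_normalSet_iff hα]
  refine ⟨hv1, fun y hy => ?_⟩
  set w := y - x with hw
  set u := uvec rm rp x with hu
  set c := ‖w‖ ^ 2 / (2 * rm ^ 2) with hc_def
  have hc : 0 ≤ c := by positivity
  have hceq : c * (2 * rm ^ 2) = ‖w‖ ^ 2 := by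
    rw [hc_def]; exact div_mul_cancel₀ _ (by positivity)
  -- for every ε > 0, the direction w + (c+ε)•u is strictly feasible
  have hkey : ∀ ε : ℝ, 0 < ε → 0 ≤ ⟪v, w + (c + ε) • u⟫ := by
    intro ε hε
    have hcε : 0 < c + ε := by linarith
    refine inner_nonneg_of_normal h0 hβ hx hvβ _ ?_ ?_ ?_
    · intro i hi
      have hwi : 0 ≤ gR w i := by
        rw [hw, gR_sub, hi]
        exact sub_nonneg.mpr (hy.1 i).1
      have hui : gR u i = rm / 2 := by rw [hu, gR_uvec, udot_of_rm hi]
      simp only [gR_add, gR_smul, hui]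
      nlinarith
    · intro i hi
      have hwi : gR w i ≤ 0 := by
        rw [hw, gR_sub, hi]
        exact sub_nonpos.mpr (hy.1 i).2
      have hui : gR u i = -(rm / 2) := by rw [hu, gR_uvec, udot_of_rp hr hi]
      simp only [gR_add, gR_smul, hui]
      nlinarith
    · intro i j hij hact
      set R := gR x i + gR x j with hR_def
      have hR : 2 * rm ≤ R := by
        have := (hx.1 i).1; have := (hx.1 j).1; rw [hR_def]; linarith
      have hRpos : 0 < R := by linarith
      set e := gC x i - gC x j with he
      have hunorm : ‖e‖ = R := hact
      have hck := contact_key h0 hx hy hij hact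
      have hadj : (cgraph x).Adj i j := (⟨hij, hact⟩ : i ≠ j ∧ _)
      have hcu : gC u i - gC u j = e := by rw [hu]; exact gC_uvec_sub_of_adj hadj
      have hgCd : gC (w + (c + ε) • u) i - gC (w + (c + ε) • u) j
          = (gC w i - gC w j) + (c + ε) • e := by
        simp only [gC_add, gC_smul]
        rw [← hcu, smul_sub]
        abel
      have hgRd : gR (w + (c + ε) • u) i + gR (w + (c + ε) • u) j
          = (gR w i + gR w j) + (c + ε) * (udot rm rp x i + udot rm rp x j) := by
        simp only [gR_add, gR_smul, hu, gR_uvec]; ring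
      rw [hgCd, hgRd, inner_add_right, real_inner_smul_right, real_inner_self_eq_norm_sq,
        hunorm]
      have hud : udot rm rp x i + udot rm rp x j ≤ rm := by
        have h1 := abs_le.mp (udot_abs_le (rm := rm) (rp := rp) h0 x i)
        have h2 := abs_le.mp (udot_abs_le (rm := rm) (rp := rp) h0 x j)
        linarith [h1.2, h2.2]
      -- contact_key: R * (gR w i + gR w j) - ‖w‖² ≤ ⟪e, gC w i - gC w j⟫
      have hck' : R * (gR w i + gR w j) - ‖w‖ ^ 2 ≤ ⟪e, gC w i - gC w j⟫ := by
        rw [he, hR_def, hw]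
        exact hck
      -- goal: R * ((gRw i + gRw j) + (c+ε)(udots)) < ⟪e, gCw i - gCw j⟫ + (c+ε) * R²
      have hprod : (c + ε) * (R * (R - (udot rm rp x i + udot rm rp x j)))
          ≥ (c + ε) * (2 * rm * rm) := by
        have : 2 * rm * rm ≤ R * (R - (udot rm rp x i + udot rm rp x j)) := by
          nlinarith
        exact mul_le_mul_of_nonneg_left this hcε.le
      have h2rm : 0 < 2 * rm ^ 2 * ε := by positivity
      nlinarith [hck', hprod, hceq, h2rm]
  -- pass to the limit ε → 0⁺
  have h2 : 0 ≤ ⟪v, w⟫ + c * ⟪v, u⟫ := by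
    have hkey' : ∀ ε : ℝ, 0 < ε → 0 ≤ ⟪v, w⟫ + (c + ε) * ⟪v, u⟫ := by
      intro ε hε
      have := hkey ε hε
      rwa [inner_add_right, real_inner_smul_right] at this
    refine aux_eps (t := ⟪v, u⟫) fun ε hε => ?_
    have := hkey' ε hε
    nlinarith [this]
  have hcs : ⟪v, u⟫ ≤ ‖u‖ := by
    have := real_inner_le_norm v u
    rwa [hv1, one_mul] at this
  have hub : ‖u‖ ≤ 2 * rp * n * Real.sqrt n := by
    rw [hu]; exact uvec_norm_le hn h0 hr hx
  have hαu : α * (2 * rp * n * Real.sqrt n) = rm ^ 2 := by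
    rw [hα_def]; field_simp
  have h5 : α * ‖u‖ ≤ rm ^ 2 := by
    calc α * ‖u‖ ≤ α * (2 * rp * n * Real.sqrt n) := mul_le_mul_of_nonneg_left hub hα.le
      _ = rm ^ 2 := hαu
  -- finish: -(‖w‖²) ≤ 2 α ⟪v, w⟫
  have h6 : -(c * ‖u‖) ≤ ⟪v, w⟫ := by
    have hcu2 : c * ⟪v, u⟫ ≤ c * ‖u‖ := mul_le_mul_of_nonneg_left hcs hc
    linarith
  have hunn : 0 ≤ ‖u‖ := norm_nonneg _
  nlinarith [mul_le_mul_of_nonneg_left h5 hc, mul_le_mul_of_nonneg_left h6 hα.le]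

/-! ### part A: nonemptiness of `normalSet α` -/

lemma norm_nminus (i : Fin n) : ‖nminus d n i‖ = 1 := by
  have h1 : ‖nminus d n i‖ ^ 2 = 1 := by
    rw [norm_sq_gconf]
    have hterm : ∀ k ∈ Finset.univ, ‖gC (nminus d n i) k‖ ^ 2 + gR (nminus d n i) k ^ 2
        = if k = i then (1 : ℝ) else 0 := by
      intro k _
      by_cases hk : k = i <;> simp [nminus, hk]
    rw [Finset.sum_congr rfl hterm, Finset.sum_ite_eq' Finset.univ i fun _ => (1 : ℝ)]
    simp
  rw [← Real.sqrt_sq (norm_nonneg (nminus d n i)), h1, Real.sqrt_one]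

lemma inner_nminus (i : Fin n) (b : GConf d n) : ⟪nminus d n i, b⟫ = gR b i := by
  rw [inner_gconf]
  have hterm : ∀ k ∈ Finset.univ, ⟪gC (nminus d n i) k, gC b k⟫ + gR (nminus d n i) k * gR b k
      = if k = i then gR b k else 0 := by
    intro k _
    by_cases hk : k = i <;> simp [nminus, hk]
  rw [Finset.sum_congr rfl hterm, Finset.sum_ite_eq' Finset.univ i fun k => gR b k]
  simp

lemma norm_nplus (i : Fin n) : ‖nplus d n i‖ = 1 := by
  have h1 : ‖nplus d n i‖ ^ 2 = 1 := by
    rw [norm_sq_gconf]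
    have hterm : ∀ k ∈ Finset.univ, ‖gC (nplus d n i) k‖ ^ 2 + gR (nplus d n i) k ^ 2
        = if k = i then (1 : ℝ) else 0 := by
      intro k _
      by_cases hk : k = i <;> simp [nplus, hk]
    rw [Finset.sum_congr rfl hterm, Finset.sum_ite_eq' Finset.univ i fun _ => (1 : ℝ)]
    simp
  rw [← Real.sqrt_sq (norm_nonneg (nplus d n i)), h1, Real.sqrt_one]

lemma inner_nplus (i : Fin n) (b : GConf d n) : ⟪nplus d n i, b⟫ = -(gR b i) := by
  rw [inner_gconf]
  have hterm : ∀ k ∈ Finset.univ, ⟪gC (nplus d n i) k, gC b k⟫ + gR (nplus d n i) k * gR b k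
      = if k = i then -(gR b k) else 0 := by
    intro k _
    by_cases hk : k = i <;> simp [nplus, hk]
  rw [Finset.sum_congr rfl hterm, Finset.sum_ite_eq' Finset.univ i fun k => -(gR b k)]
  simp

lemma sum_ite_pair {M : Type*} [AddCommMonoid M] {i j : Fin n} (hij : i ≠ j)
    (a b : Fin n → M) :
    ∑ k : Fin n, (if k = i then a k else if k = j then b k else 0) = a i + b j := by
  have hsplit : ∀ k ∈ Finset.univ, (if k = i then a k else if k = j then b k else 0)
      = (if k = i then a k else 0) + (if k = j then b k else 0) := by
    intro k _
    by_cases h1 : k = i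
    · subst h1; rw [if_pos rfl, if_pos rfl, if_neg hij, add_zero]
    · rw [if_neg h1, if_neg h1, zero_add]
  rw [Finset.sum_congr rfl hsplit, Finset.sum_add_distrib,
    Finset.sum_ite_eq' Finset.univ i a, Finset.sum_ite_eq' Finset.univ j b]
  simp

lemma gC_nij_left (x : GConf d n) (i j : Fin n) :
    gC (nij x i j) i = (2 * (gR x i + gR x j))⁻¹ • (gC x i - gC x j) := by simp [nij]

lemma gR_nij_left (x : GConf d n) (i j : Fin n) : gR (nij x i j) i = -(1 / 2 : ℝ) := by
  simp [nij]

lemma gC_nij_right {i j : Fin n} (hij : i ≠ j) (x : GConf d n) :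
    gC (nij x i j) j = (2 * (gR x i + gR x j))⁻¹ • (gC x j - gC x i) := by
  simp [nij, hij.symm]

lemma gR_nij_right {i j : Fin n} (hij : i ≠ j) (x : GConf d n) :
    gR (nij x i j) j = -(1 / 2 : ℝ) := by simp [nij, hij.symm]

lemma gC_nij_other {i j k : Fin n} (hki : k ≠ i) (hkj : k ≠ j) (x : GConf d n) :
    gC (nij x i j) k = 0 := by simp [nij, hki, hkj]

lemma gR_nij_other {i j k : Fin n} (hki : k ≠ i) (hkj : k ≠ j) (x : GConf d n) :
    gR (nij x i j) k = 0 := by simp [nij, hki, hkj]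

lemma norm_nij {rm rp : ℝ} (h0 : 0 < rm) {x : GConf d n} (hx : x ∈ Ag d n rm rp)
    {i j : Fin n} (hij : i ≠ j) (hact : ‖gC x i - gC x j‖ = gR x i + gR x j) :
    ‖nij x i j‖ = 1 := by
  have hRpos : 0 < gR x i + gR x j := by
    have := (hx.1 i).1; have := (hx.1 j).1; linarith
  have hne : gR x i + gR x j ≠ 0 := hRpos.ne'
  have hnji : ‖gC x j - gC x i‖ = gR x i + gR x j := by rw [norm_sub_rev]; exact hact
  have h1 : ‖nij x i j‖ ^ 2 = 1 := by
    rw [norm_sq_gconf]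
    have hterm : ∀ k ∈ Finset.univ, ‖gC (nij x i j) k‖ ^ 2 + gR (nij x i j) k ^ 2
        = if k = i then (1 : ℝ) / 2 else if k = j then (1 : ℝ) / 2 else 0 := by
      intro k _
      by_cases hk : k = i
      · subst hk
        rw [if_pos rfl, gC_nij_left, gR_nij_left, norm_smul, Real.norm_eq_abs,
          abs_of_pos (by positivity : (0:ℝ) < (2 * (gR x k + gR x j))⁻¹), hact]
        field_simp
        ring
      · rw [if_neg hk]
        by_cases hk2 : k = j
        · subst hk2
          rw [if_pos rfl, gC_nij_right hij, gR_nij_right hij, norm_smul, Real.norm_eq_abs,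
            abs_of_pos (by positivity : (0:ℝ) < (2 * (gR x i + gR x k))⁻¹), hnji]
          field_simp
          ring
        · rw [if_neg hk2, gC_nij_other hk hk2, gR_nij_other hk hk2]
          simp
    rw [Finset.sum_congr rfl hterm, sum_ite_pair hij (fun _ => (1:ℝ)/2) fun _ => (1:ℝ)/2]
    norm_num
  rw [← Real.sqrt_sq (norm_nonneg (nij x i j)), h1, Real.sqrt_one]

lemma inner_nij {x : GConf d n} {i j : Fin n} (hij : i ≠ j) (b : GConf d n) :
    ⟪nij x i j, b⟫ = (2 * (gR x i + gR x j))⁻¹ * ⟪gC x i - gC x j, gC b i - gC b j⟫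
      - (gR b i + gR b j) / 2 := by
  rw [inner_gconf]
  have hterm : ∀ k ∈ Finset.univ, ⟪gC (nij x i j) k, gC b k⟫ + gR (nij x i j) k * gR b k
      = if k = i then ((2 * (gR x i + gR x j))⁻¹ * ⟪gC x i - gC x j, gC b k⟫ - gR b k / 2)
        else if k = j then
          ((2 * (gR x i + gR x j))⁻¹ * ⟪gC x j - gC x i, gC b k⟫ - gR b k / 2)
        else 0 := by
    intro k _
    by_cases hk : k = i
    · subst hk
      rw [if_pos rfl, gC_nij_left, gR_nij_left, real_inner_smul_left]
      ring
    · rw [if_neg hk]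
      by_cases hk2 : k = j
      · subst hk2
        rw [if_pos rfl, gC_nij_right hij, gR_nij_right hij, real_inner_smul_left]
        ring
      · rw [if_neg hk2, gC_nij_other hk hk2, gR_nij_other hk hk2]
        simp
  rw [Finset.sum_congr rfl hterm, sum_ite_pair hij]
  have hneg : ⟪gC x j - gC x i, gC b j⟫ = -⟪gC x i - gC x j, gC b j⟫ := by
    rw [show gC x j - gC x i = -(gC x i - gC x j) from (neg_sub _ _).symm, inner_neg_left]
  rw [hneg, inner_sub_right]
  ring

lemma alpha_le {rm rp : ℝ} (hn : 1 ≤ n) (h0 : 0 < rm) (hr : rm < rp) :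
    rm ^ 2 / (2 * rp * n * Real.sqrt n) ≤ 2 * rm := by
  have hrp : 0 < rp := h0.trans hr
  have hn1 : (1 : ℝ) ≤ (n : ℝ) := by exact_mod_cast hn
  have hsn : 1 ≤ Real.sqrt n := by
    rw [show (1:ℝ) = Real.sqrt 1 from Real.sqrt_one.symm]
    exact Real.sqrt_le_sqrt (by linarith)
  have hn32 : 1 ≤ (n : ℝ) * Real.sqrt n := by nlinarith
  have hden : 0 < 2 * rp * n * Real.sqrt n := by positivity
  rw [div_le_iff₀ hden]
  have key : 2 * rm * (2 * rp) * 1 ≤ 2 * rm * (2 * rp) * ((n : ℝ) * Real.sqrt n) :=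
    mul_le_mul_of_nonneg_left hn32 (by positivity)
  nlinarith [key]

lemma nonempty_normalSet {rm rp : ℝ} (hn : 1 ≤ n) (h0 : 0 < rm) (hr : rm < rp)
    {x : GConf d n} (hx : x ∈ frontier (Ag d n rm rp)) :
    (normalSet (Ag d n rm rp) x (rm ^ 2 / (2 * rp * n * Real.sqrt n))).Nonempty := by
  have hrp : 0 < rp := h0.trans hr
  have hn1 : (1 : ℝ) ≤ (n : ℝ) := by exact_mod_cast hn
  have hsn : 0 < Real.sqrt n := Real.sqrt_pos.mpr (by linarith)
  set α := rm ^ 2 / (2 * rp * n * Real.sqrt n) with hα_def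
  have hα : 0 < α := by positivity
  have hxA : x ∈ Ag d n rm rp := (isClosed_Ag rm rp).frontier_subset hx
  have hα2rm : α ≤ 2 * rm := alpha_le hn h0 hr
  rcases exists_active hx with ⟨i, hi⟩ | ⟨i, hi⟩ | ⟨i, j, hij, hact⟩
  · refine ⟨nminus d n i, (mem_normalSet_iff hα).mpr ⟨norm_nminus i, fun y hy => ?_⟩⟩
    rw [inner_nminus]
    have h1 : 0 ≤ gR (y - x) i := by
      rw [gR_sub, hi]
      exact sub_nonneg.mpr (hy.1 i).1
    have h2 : 0 ≤ ‖y - x‖ ^ 2 := sq_nonneg _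
    nlinarith
  · refine ⟨nplus d n i, (mem_normalSet_iff hα).mpr ⟨norm_nplus i, fun y hy => ?_⟩⟩
    rw [inner_nplus]
    have h1 : gR (y - x) i ≤ 0 := by
      rw [gR_sub, hi]
      exact sub_nonpos.mpr (hy.1 i).2
    have h2 : 0 ≤ ‖y - x‖ ^ 2 := sq_nonneg _
    nlinarith
  · refine ⟨nij x i j, (mem_normalSet_iff hα).mpr
      ⟨norm_nij h0 hxA hij hact, fun y hy => ?_⟩⟩
    set R := gR x i + gR x j with hR_def
    have hR : 2 * rm ≤ R := by
      have := (hxA.1 i).1; have := (hxA.1 j).1; rw [hR_def]; linarith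
    have hRpos : 0 < R := by linarith
    have h2R : (2 * R) * (2 * R)⁻¹ = 1 := mul_inv_cancel₀ (by positivity)
    have hck := contact_key h0 hxA hy hij hact
    set I := ⟪gC x i - gC x j, gC (y - x) i - gC (y - x) j⟫ with hI_def
    set M := ⟪nij x i j, y - x⟫ with hM_def
    have hM : 2 * R * M = I - R * (gR (y - x) i + gR (y - x) j) := by
      rw [hM_def, inner_nij hij]
      calc 2 * R * ((2 * R)⁻¹ * I - (gR (y - x) i + gR (y - x) j) / 2)
          = (2 * R) * (2 * R)⁻¹ * I - R * (gR (y - x) i + gR (y - x) j) := by ring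
        _ = I - R * (gR (y - x) i + gR (y - x) j) := by rw [h2R]; ring
    have h9 : -(‖y - x‖ ^ 2) ≤ 2 * R * M := by
      rw [hM]
      have : R * (gR (y - x) i + gR (y - x) j) - ‖y - x‖ ^ 2 ≤ I := hck
      linarith
    have hq : 0 ≤ ‖y - x‖ ^ 2 := sq_nonneg _
    have hαR : α ≤ R := le_trans hα2rm hR
    nlinarith [h9, hq, hαR, hα, hRpos]

end
end StmtAux


/-- The set `A_g` of allowed globule configurations satisfies the Uniform
Exterior Sphere property with constant `α = r₋²/(2 r₊ n √n)`. -/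
theorem stmt_8 (d n : ℕ) (hd : 2 ≤ d) (hn : 1 ≤ n) (rm rp : ℝ)
    (h0 : 0 < rm) (hr : rm < rp) :
    UES (Ag d n rm rp) (rm ^ 2 / (2 * rp * n * Real.sqrt n)) := by
  intro x hx
  have hrp : 0 < rp := h0.trans hr
  have hn1 : (1 : ℝ) ≤ (n : ℝ) := by exact_mod_cast hn
  have hsn : 0 < Real.sqrt n := Real.sqrt_pos.mpr (by linarith)
  have hα : 0 < rm ^ 2 / (2 * rp * n * Real.sqrt n) := by positivity
  have hxA : x ∈ Ag d n rm rp := (StmtAux.isClosed_Ag rm rp).frontier_subset hx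
  constructor
  · apply Set.Subset.antisymm
    · intro v hv
      simp only [normalCone, Set.mem_iUnion, Set.mem_Ioi, exists_prop] at hv
      obtain ⟨β, hβ, hvβ⟩ := hv
      exact StmtAux.coneSubset hn h0 hr hxA hβ hvβ
    · intro v hv
      exact Set.mem_biUnion (Set.mem_Ioi.mpr hα) hv
  · exact StmtAux.nonempty_normalSet hn h0 hr hx
end

section
/- Let D_{ij} = {x ∈ ℝ^{(d+1)n} : |x_i − x_j| ≥ x̆_i + x̆_j} (i ≠ j), and let x be a configuration with |x_i − x_j| = x̆_i + x̆_j > 0. Then the open ball of radius x̆_i + x̆_j centered at x − (x̆_i + x̆_j) n_{ij}(x) is disjoint from D_{ij}; equivalently, for every y ∈ D_{ij}, (y − x)·n_{ij}(x) + |y − x|²/(2(x̆_i + x̆_j)) ≥ 0. In particular, since x̆_i + x̆_j ≥ 2r_- on A_g, D_{ij} has the Uniform Exterior Sphere property restricted to A_g with constant 2r_-. -/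
open scoped RealInnerProductSpace

/-- The hard-core constraint set `D_{ij} = {x : |x_i − x_j| ≥ x̆_i + x̆_j}`. -/
def Dij (d n : ℕ) (i j : Fin n) : Set (GConf d n) :=
  {x | ‖gC x i - gC x j‖ ≥ gR x i + gR x j}

section MyAux
variable {d n : ℕ}

lemma gC_mkG (f : Fin n → EuclideanSpace ℝ (Fin d) × ℝ) (k : Fin n) : gC (mkG f) k = (f k).1 := rfl
lemma gR_mkG (f : Fin n → EuclideanSpace ℝ (Fin d) × ℝ) (k : Fin n) : gR (mkG f) k = (f k).2 := rfl

lemma inner_eq (z w : GConf d n) : ⟪z, w⟫ = ∑ k, (⟪gC z k, gC w k⟫ + gR z k * gR w k) := by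
  rw [PiLp.inner_apply]
  simp [WithLp.prod_inner_apply, gC, gR, RCLike.inner_apply]
  exact Finset.sum_congr rfl (fun k _ => by ring)

lemma norm_sq_eq (z : GConf d n) : ‖z‖^2 = ∑ k, (‖gC z k‖^2 + (gR z k)^2) := by
  rw [PiLp.norm_sq_eq_of_L2]
  simp [WithLp.prod_norm_sq_eq_of_L2, gC, gR, sq_abs]

lemma inner_nij (x z : GConf d n) (i j : Fin n) (hij : i ≠ j) :
    ⟪z, nij x i j⟫ = (2*(gR x i + gR x j))⁻¹ * ⟪gC z i - gC z j, gC x i - gC x j⟫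
      - (gR z i + gR z j)/2 := by
  rw [inner_eq]
  have hz : ∀ k ∈ Finset.univ, k ∉ ({i, j} : Finset (Fin n)) →
      (⟪gC z k, gC (nij x i j) k⟫ + gR z k * gR (nij x i j) k) = 0 := by
    intro k _ hk
    simp only [Finset.mem_insert, Finset.mem_singleton, not_or] at hk
    rw [nij, gC_mkG, gR_mkG]
    simp [hk.1, hk.2]
  rw [← Finset.sum_subset (Finset.subset_univ _) hz, Finset.sum_pair hij]
  rw [nij, gC_mkG, gC_mkG, gR_mkG, gR_mkG]
  simp only [if_pos rfl, if_neg hij.symm, if_true]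
  rw [real_inner_smul_right, real_inner_smul_right]
  have hvj : gC x j - gC x i = -(gC x i - gC x j) := by abel
  rw [hvj, inner_neg_right, inner_sub_left]
  ring

lemma norm_nij (x : GConf d n) (i j : Fin n) (hij : i ≠ j)
    (hc : ‖gC x i - gC x j‖ = gR x i + gR x j) (hs : 0 < gR x i + gR x j) :
    ‖nij x i j‖ = 1 := by
  have h2 : ‖nij x i j‖^2 = 1 := by
    rw [norm_sq_eq]
    have hz : ∀ k ∈ Finset.univ, k ∉ ({i, j} : Finset (Fin n)) →
        (‖gC (nij x i j) k‖^2 + (gR (nij x i j) k)^2) = 0 := by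
      intro k _ hk
      simp only [Finset.mem_insert, Finset.mem_singleton, not_or] at hk
      rw [nij, gC_mkG, gR_mkG]
      simp [hk.1, hk.2]
    rw [← Finset.sum_subset (Finset.subset_univ _) hz, Finset.sum_pair hij]
    rw [nij, gC_mkG, gC_mkG, gR_mkG, gR_mkG]
    simp only [if_pos rfl, if_neg hij.symm, if_true]
    rw [norm_smul, norm_smul, norm_sub_rev (gC x j), hc]
    have hs' : (2*(gR x i + gR x j))⁻¹ ≥ 0 := by positivity
    rw [Real.norm_eq_abs, abs_of_nonneg hs']
    have hne : gR x i + gR x j ≠ 0 := ne_of_gt hs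
    field_simp
    ring
  nlinarith [norm_nonneg (nij x i j)]

lemma norm_sq_ge (z : GConf d n) (i j : Fin n) (hij : i ≠ j) :
    ‖gC z i‖^2 + (gR z i)^2 + ‖gC z j‖^2 + (gR z j)^2 ≤ ‖z‖^2 := by
  rw [norm_sq_eq]
  have h := Finset.sum_le_sum_of_subset_of_nonneg
    (Finset.subset_univ ({i, j} : Finset (Fin n)))
    (fun k _ _ => by positivity : ∀ k ∈ Finset.univ, k ∉ ({i,j} : Finset (Fin n)) →
      (0:ℝ) ≤ ‖gC z k‖^2 + (gR z k)^2)
  rw [Finset.sum_pair hij] at h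
  linarith

lemma real_key (s A B U PQ2 Np2 Nq2 Z2 IP : ℝ)
    (hs : 0 < s) (hU0 : 0 ≤ U) (hD : s + A + B ≤ U)
    (hu2 : U^2 = PQ2 + 2*IP + s^2) (hpq : PQ2 ≤ 2*Np2 + 2*Nq2)
    (hnorm : Np2 + A^2 + Nq2 + B^2 ≤ Z2) :
    0 ≤ IP - s*(A + B) + Z2 := by
  rcases le_or_gt 0 (s + A + B) with ht | ht
  · have hU : (s + A + B)^2 ≤ U^2 := by nlinarith
    nlinarith [sq_nonneg (A - B)]
  · nlinarith [sq_nonneg U, mul_pos hs (show (0:ℝ) < -(s + A + B) by linarith)]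

lemma key (x y : GConf d n) (i j : Fin n) (hij : i ≠ j)
    (hc : ‖gC x i - gC x j‖ = gR x i + gR x j) (hs : 0 < gR x i + gR x j)
    (hy : y ∈ Dij d n i j) :
    0 ≤ 2*(gR x i + gR x j)*⟪y - x, nij x i j⟫ + ‖y - x‖^2 := by
  have hne : (2*(gR x i + gR x j)) ≠ 0 := by positivity
  have e1 : gC (y - x) i = gC y i - gC x i := rfl
  have e2 : gC (y - x) j = gC y j - gC x j := rfl
  have e3 : gR (y - x) i = gR y i - gR x i := rfl
  have e4 : gR (y - x) j = gR y j - gR x j := rfl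
  have hIP2 : 2*(gR x i + gR x j)*⟪y - x, nij x i j⟫
      = ⟪(gC y i - gC x i) - (gC y j - gC x j), gC x i - gC x j⟫
        - (gR x i + gR x j) * ((gR y i - gR x i) + (gR y j - gR x j)) := by
    rw [inner_nij x (y - x) i j hij, e1, e2, e3, e4]
    field_simp
  have hnorm : ‖gC y i - gC x i‖^2 + (gR y i - gR x i)^2
      + ‖gC y j - gC x j‖^2 + (gR y j - gR x j)^2 ≤ ‖y - x‖^2 := by
    have h := norm_sq_ge (y - x) i j hij
    rw [e1, e2, e3, e4] at h
    exact h
  have hD : gR y i + gR y j ≤ ‖gC y i - gC y j‖ := hy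
  have hu2 : ‖gC y i - gC y j‖^2
      = ‖(gC y i - gC x i) - (gC y j - gC x j)‖^2
        + 2*⟪(gC y i - gC x i) - (gC y j - gC x j), gC x i - gC x j⟫
        + (gR x i + gR x j)^2 := by
    have hdec : gC y i - gC y j
        = ((gC y i - gC x i) - (gC y j - gC x j)) + (gC x i - gC x j) := by abel
    rw [hdec, norm_add_sq_real, hc]
  have hpq : ‖(gC y i - gC x i) - (gC y j - gC x j)‖^2
      ≤ 2*‖gC y i - gC x i‖^2 + 2*‖gC y j - gC x j‖^2 := by
    have h1 := norm_sub_le (gC y i - gC x i) (gC y j - gC x j)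
    nlinarith [sq_nonneg (‖gC y i - gC x i‖ - ‖gC y j - gC x j‖),
      norm_nonneg ((gC y i - gC x i) - (gC y j - gC x j)),
      norm_nonneg (gC y i - gC x i), norm_nonneg (gC y j - gC x j)]
  rw [hIP2]
  have hD2 : (gR x i + gR x j) + (gR y i - gR x i) + (gR y j - gR x j)
      ≤ ‖gC y i - gC y j‖ := by linarith
  have := real_key (gR x i + gR x j) (gR y i - gR x i) (gR y j - gR x j)
    (‖gC y i - gC y j‖) (‖(gC y i - gC x i) - (gC y j - gC x j)‖^2)
    (‖gC y i - gC x i‖^2) (‖gC y j - gC x j‖^2) (‖y - x‖^2)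
    (⟪(gC y i - gC x i) - (gC y j - gC x j), gC x i - gC x j⟫)
    hs (norm_nonneg _) hD2 (by linarith) hpq hnorm
  linarith

lemma ball_disj (x : GConf d n) (i j : Fin n) (hij : i ≠ j)
    (hc : ‖gC x i - gC x j‖ = gR x i + gR x j) (hs : 0 < gR x i + gR x j)
    (α : ℝ) (hα : 0 < α) (hαs : α ≤ gR x i + gR x j) :
    Metric.ball (x - α • nij x i j) α ∩ Dij d n i j = ∅ := by
  rw [Set.eq_empty_iff_forall_notMem]
  rintro y ⟨hb, hD⟩
  have hk := key x y i j hij hc hs hD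
  have hn1 : ‖nij x i j‖ = 1 := norm_nij x i j hij hc hs
  rw [Metric.mem_ball, dist_eq_norm] at hb
  have he : y - (x - α • nij x i j) = (y - x) + α • nij x i j := by abel
  rw [he] at hb
  have hsq : ‖(y - x) + α • nij x i j‖^2
      = ‖y - x‖^2 + 2*(α*⟪y - x, nij x i j⟫) + α^2 := by
    rw [norm_add_sq_real, real_inner_smul_right, norm_smul, hn1]
    rw [Real.norm_eq_abs, abs_of_pos hα]
    ring
  have hb2 : ‖(y - x) + α • nij x i j‖^2 < α^2 :=
    (pow_lt_pow_left₀ hb (norm_nonneg _) (by norm_num)).trans_le le_rfl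
  have hZ : ‖y - x‖^2 + 2*(α*⟪y - x, nij x i j⟫) < 0 := by linarith [hsq ▸ hb2]
  have hIneg : ⟪y - x, nij x i j⟫ < 0 := by nlinarith [sq_nonneg ‖y - x‖]
  nlinarith [mul_nonneg (sub_nonneg.2 hαs) (le_of_lt (neg_pos.2 hIneg))]

end MyAux

/-- If `|x_i − x_j| = x̆_i + x̆_j > 0` then the open ball of radius
`x̆_i + x̆_j` centered at `x − (x̆_i + x̆_j) n_{ij}(x)` is disjoint from `D_{ij}`; equivalently,
`(y − x)·n_{ij}(x) + |y − x|²/(2(x̆_i + x̆_j)) ≥ 0` for all `y ∈ D_{ij}`. In particular, since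
`x̆_i + x̆_j ≥ 2r₋` on `A_g`, `D_{ij}` has the Uniform Exterior Sphere property restricted to
`A_g` with constant `2r₋`. -/
theorem stmt_11 (d n : ℕ) (hd : 2 ≤ d) (hn : 1 ≤ n) (rm rp : ℝ)
    (h0 : 0 < rm) (hr : rm < rp) (i j : Fin n) (hij : i ≠ j) :
    (∀ x : GConf d n, ‖gC x i - gC x j‖ = gR x i + gR x j → 0 < gR x i + gR x j →
      Metric.ball (x - (gR x i + gR x j) • nij x i j) (gR x i + gR x j) ∩ Dij d n i j = ∅ ∧
      ∀ y ∈ Dij d n i j,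
        ⟪y - x, nij x i j⟫ + ‖y - x‖ ^ 2 / (2 * (gR x i + gR x j)) ≥ 0) ∧
    ∀ x ∈ Ag d n rm rp, ‖gC x i - gC x j‖ = gR x i + gR x j →
      Metric.ball (x - (2 * rm) • nij x i j) (2 * rm) ∩ Dij d n i j = ∅ := by
  
  constructor
  · intro x hc hs
    refine ⟨ball_disj x i j hij hc hs _ hs le_rfl, ?_⟩
    intro y hy
    have hk := key x y i j hij hc hs hy
    have h2s : (0:ℝ) < 2*(gR x i + gR x j) := by linarith
    rw [ge_iff_le]
    calc (0:ℝ)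
        ≤ (2*(gR x i + gR x j)*⟪y - x, nij x i j⟫ + ‖y - x‖^2) / (2*(gR x i + gR x j)) :=
          div_nonneg hk h2s.le
      _ = ⟪y - x, nij x i j⟫ + ‖y - x‖^2 / (2*(gR x i + gR x j)) := by
          field_simp
  · intro x hx hc
    have h1 := (hx.1 i).1
    have h2 := (hx.1 j).1
    have hs : 0 < gR x i + gR x j := by linarith
    exact ball_disj x i j hij hc hs _ (by linarith) (by linarith)
end
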